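/- Delayed Grönwall–Bellman inequality: let β > 0, σ₂ > 0, τ ≥ 0 and set γ = σ₂e^{βτ}. Let g : [−τ,∞) → [0,∞) and μ : [−τ,∞) → [0,∞) be continuous and suppose that g(s) ≤ μ(s) for all s ∈ [−τ,0] and that g(t) ≤ μ(t) + βσ₂ ∫₀ᵗ e^{−β(t−u)} g(u−τ) du for all t ≥ 0. Then g(t) ≤ μ(t) + βσ₂ ∫₀ᵗ e^{−β(1−γ)(t−u)} μ(u−τ) du for all t ≥ 0. -/

import Mathlib

open Real Set

/-- Delayed Grönwall–Bellman inequality (step (c) of the proof of Lemma 4.1). -/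
theorem stmt_3 (β σ₂ τ γ : ℝ) (hβ : 0 < β) (hσ : 0 < σ₂) (hτ : 0 ≤ τ)
    (hγ : γ = σ₂ * Real.exp (β * τ))
    (g μ : ℝ → ℝ)
    (hgc : ContinuousOn g (Set.Ici (-τ))) (hμc : ContinuousOn μ (Set.Ici (-τ)))
    (hg0 : ∀ s, -τ ≤ s → 0 ≤ g s) (hμ0 : ∀ s, -τ ≤ s → 0 ≤ μ s)
    (hinit : ∀ s ∈ Set.Icc (-τ) 0, g s ≤ μ s)
    (hineq : ∀ t ≥ (0:ℝ), g t ≤ μ t +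
      β * σ₂ * ∫ u in (0:ℝ)..t, Real.exp (-β * (t - u)) * g (u - τ)) :
    ∀ t ≥ (0:ℝ), g t ≤ μ t +
      β * σ₂ * ∫ u in (0:ℝ)..t, Real.exp (-β * (1 - γ) * (t - u)) * μ (u - τ) := by
  -- continuous extensions of g and μ to all of ℝ
  set G : ℝ → ℝ := fun u => g (max u (-τ)) with hG
  set M : ℝ → ℝ := fun u => μ (max u (-τ)) with hM
  have hmaxmem : ∀ u : ℝ, max u (-τ) ∈ Set.Ici (-τ) := fun u => Set.mem_Ici.mpr (le_max_right _ _)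
  have hGc : Continuous G :=
    hgc.comp_continuous (continuous_id.max continuous_const) hmaxmem
  have hMc : Continuous M :=
    hμc.comp_continuous (continuous_id.max continuous_const) hmaxmem
  have hGeq : ∀ u : ℝ, -τ ≤ u → G u = g u := fun u hu => by
    simp [hG, max_eq_left hu]
  have hMeq : ∀ u : ℝ, -τ ≤ u → M u = μ u := fun u hu => by
    simp [hM, max_eq_left hu]
  have hG0 : ∀ u : ℝ, 0 ≤ G u := fun u => hg0 _ (le_max_right _ _)
  have hM0 : ∀ u : ℝ, 0 ≤ M u := fun u => hμ0 _ (le_max_right _ _)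
  have hGM : ∀ u : ℝ, u ≤ 0 → G u ≤ M u := fun u hu =>
    hinit _ ⟨le_max_right _ _, max_le hu (neg_nonpos_of_nonneg hτ)⟩
  -- the auxiliary functions
  set F : ℝ → ℝ := fun u => Real.exp (β * u) * G (u - τ) with hF
  set h : ℝ → ℝ := fun u => Real.exp (β * u) * M (u - τ) with hh
  have hFc : Continuous F := (Real.continuous_exp.comp (continuous_const.mul continuous_id)).mul
    (hGc.comp (continuous_id.sub continuous_const))
  have hhc : Continuous h := (Real.continuous_exp.comp (continuous_const.mul continuous_id)).mul
    (hMc.comp (continuous_id.sub continuous_const))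
  have hF0 : ∀ u, 0 ≤ F u := fun u => mul_nonneg (Real.exp_pos _).le (hG0 _)
  set w : ℝ → ℝ := fun t => ∫ u in (0:ℝ)..t, F u with hw
  set J : ℝ → ℝ := fun t => ∫ u in (0:ℝ)..t, Real.exp (-(β * γ) * u) * h u with hJ
  have hJint : Continuous fun u => Real.exp (-(β * γ) * u) * h u :=
    (Real.continuous_exp.comp (continuous_const.mul continuous_id)).mul hhc
  set E : ℝ → ℝ := fun t => Real.exp (β * γ * t) * J t with hE
  -- w is monotone and nonneg
  have hwmono : Monotone w := by
    intro s t hst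
    have hsub : w t - w s = ∫ u in s..t, F u := by
      rw [hw]
      simp only
      exact intervalIntegral.integral_interval_sub_left
        (hFc.intervalIntegrable _ _) (hFc.intervalIntegrable _ _)
    have hnn : (0:ℝ) ≤ ∫ u in s..t, F u :=
      intervalIntegral.integral_nonneg hst (fun u _ => hF0 u)
    linarith
  have hw0 : w 0 = 0 := by simp [hw]
  have hwpos : ∀ t, 0 ≤ t → 0 ≤ w t := fun t ht => hw0 ▸ hwmono ht
  have hγpos : 0 < γ := by rw [hγ]; positivity
  -- rewrite the hypothesis in terms of w
  have hineq' : ∀ t, 0 ≤ t → g t ≤ μ t + β * σ₂ * (Real.exp (-(β * t)) * w t) := by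
    intro t ht
    have := hineq t ht
    have hconv : (∫ u in (0:ℝ)..t, Real.exp (-β * (t - u)) * g (u - τ))
        = Real.exp (-(β * t)) * w t := by
      rw [hw]; simp only
      rw [← intervalIntegral.integral_const_mul]
      apply intervalIntegral.integral_congr
      intro u hu
      rw [Set.uIcc_of_le ht] at hu
      have hu0 : (0:ℝ) ≤ u := hu.1
      rw [hF]
      simp only
      rw [hGeq _ (by linarith), ← mul_assoc, ← Real.exp_add]
      ring_nf
    rw [hconv] at this
    exact this
  -- key differential inequality ingredient
  have hkey : ∀ t, 0 ≤ t → F t ≤ h t + β * γ * w t := by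
    intro t ht
    rcases le_total t τ with hcase | hcase
    · have : G (t - τ) ≤ M (t - τ) := hGM _ (by linarith)
      have h1 : F t ≤ h t := by
        rw [hF, hh]
        exact mul_le_mul_of_nonneg_left this (Real.exp_pos _).le
      have : 0 ≤ β * γ * w t := mul_nonneg (mul_nonneg hβ.le hγpos.le) (hwpos t ht)
      linarith
    · -- t ≥ τ
      have ht' : (0:ℝ) ≤ t - τ := by linarith
      have h1 := hineq' (t - τ) ht'
      have h2 : G (t - τ) ≤ M (t - τ) + β * σ₂ * (Real.exp (-(β * (t - τ))) * w (t - τ)) := by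
        rw [hGeq _ (by linarith), hMeq _ (by linarith)]
        exact h1
      have h3 : F t ≤ h t + Real.exp (β * t) *
          (β * σ₂ * (Real.exp (-(β * (t - τ))) * w (t - τ))) := by
        rw [hF, hh]
        calc Real.exp (β * t) * G (t - τ)
            ≤ Real.exp (β * t) * (M (t - τ) + β * σ₂ * (Real.exp (-(β * (t - τ))) * w (t - τ))) :=
              mul_le_mul_of_nonneg_left h2 (Real.exp_pos _).le
          _ = _ := by ring
      have hcanc : Real.exp (β * t) * Real.exp (-(β * (t - τ))) = Real.exp (β * τ) := by
        rw [← Real.exp_add]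
        congr 1
        ring
      have h4 : Real.exp (β * t) * (β * σ₂ * (Real.exp (-(β * (t - τ))) * w (t - τ)))
          = β * γ * w (t - τ) := by
        rw [hγ, ← hcanc]
        ring
      have h5 : w (t - τ) ≤ w t := hwmono (by linarith)
      calc F t ≤ h t + β * γ * w (t - τ) := by rw [← h4]; exact h3
        _ ≤ h t + β * γ * w t := by
            have := mul_le_mul_of_nonneg_left h5 (mul_nonneg hβ.le hγpos.le)
            linarith
  -- Grönwall step: w t ≤ E t for t ≥ 0
  have hwE : ∀ T, 0 ≤ T → w T ≤ E T := by
    intro T hT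
    set y : ℝ → ℝ := fun t => w t - E t with hy
    have hwc : Continuous w := by
      rw [hw]
      exact intervalIntegral.continuous_primitive (fun a b => hFc.intervalIntegrable _ _) 0
    have hJc : Continuous J := by
      rw [hJ]
      exact intervalIntegral.continuous_primitive (fun a b => hJint.intervalIntegrable _ _) 0
    have hEc : Continuous E :=
      (Real.continuous_exp.comp (continuous_const.mul continuous_id)).mul hJc
    have hyc : Continuous y := hwc.sub hEc
    have hderiv : ∀ x, HasDerivAt y (F x - (β * γ * E x + h x)) x := by
      intro x
      have hdw : HasDerivAt w (F x) x := by
        rw [hw]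
        exact intervalIntegral.integral_hasDerivAt_right (hFc.intervalIntegrable _ _)
          (hFc.stronglyMeasurableAtFilter _ _) hFc.continuousAt
      have hdJ : HasDerivAt J (Real.exp (-(β * γ) * x) * h x) x := by
        rw [hJ]
        exact intervalIntegral.integral_hasDerivAt_right (hJint.intervalIntegrable _ _)
          (hJint.stronglyMeasurableAtFilter _ _) hJint.continuousAt
      have hdexp : HasDerivAt (fun t => Real.exp (β * γ * t)) (β * γ * Real.exp (β * γ * x)) x := by
        have h6 := ((hasDerivAt_id x).const_mul (β * γ)).exp
        simp only [id_eq] at h6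
        convert h6 using 1
        ring
      have hcanc : Real.exp (β * γ * x) * (Real.exp (-(β * γ) * x) * h x) = h x := by
        rw [← mul_assoc, ← Real.exp_add,
          show β * γ * x + -(β * γ) * x = 0 from by ring, Real.exp_zero, one_mul]
      have hdE : HasDerivAt E (β * γ * E x + h x) x := by
        have h6 := hdexp.mul hdJ
        rw [hcanc] at h6
        simpa [hE, mul_assoc, Pi.mul_def] using h6
      exact (hdw.sub hdE)
    have hy0 : y 0 = 0 := by simp [hy, hE, hJ, hw0]
    have := le_gronwallBound_of_liminf_deriv_right_le (f := y)
      (f' := fun x => F x - (β * γ * E x + h x)) (δ := 0) (K := β * γ) (ε := 0)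
      (a := 0) (b := T) hyc.continuousOn
      (fun x _ r hr => ((hderiv x).hasDerivWithinAt).liminf_right_slope_le hr)
      (le_of_eq hy0)
      (fun x hx => by
        have := hkey x hx.1
        simp only [hy]
        linarith)
      T ⟨hT, le_rfl⟩
    rw [gronwallBound_ε0, zero_mul] at this
    simpa [hy] using (sub_nonpos.mp (this.trans (le_of_eq rfl)))
  -- conclusion
  intro t ht
  have h1 := hineq' t ht
  have h2 := hwE t ht
  have h3 : g t ≤ μ t + β * σ₂ * (Real.exp (-(β * t)) * E t) := by
    have hexp : (0:ℝ) ≤ Real.exp (-(β * t)) := (Real.exp_pos _).le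
    have h5 := mul_le_mul_of_nonneg_left (mul_le_mul_of_nonneg_left h2 hexp)
      (by positivity : (0:ℝ) ≤ β * σ₂)
    linarith
  have h4 : Real.exp (-(β * t)) * E t
      = ∫ u in (0:ℝ)..t, Real.exp (-β * (1 - γ) * (t - u)) * μ (u - τ) := by
    rw [hE, hJ]
    simp only
    rw [← mul_assoc, ← Real.exp_add, ← intervalIntegral.integral_const_mul]
    apply intervalIntegral.integral_congr
    intro u hu
    rw [Set.uIcc_of_le ht] at hu
    have hu0 : (0:ℝ) ≤ u := hu.1
    rw [hh]
    simp only
    rw [hMeq _ (by linarith), ← mul_assoc, ← mul_assoc, ← Real.exp_add, ← Real.exp_add]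
    ring_nf
  rw [h4] at h3
  exact h3
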